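/- Let μ be a p×p matrix of locally finite measures on [0,∞) satisfying (A1), (A2) and (A3). Then there exists a real number α ∈ Λ with ρ(Lμ(α)) = 1 (a Malthusian parameter), and every λ ∈ Λ satisfies Re(λ) ≤ α. -/

import Mathlib

open MeasureTheory Filter Topology

noncomputable section

/-- The spectral radius of a complex `p × p` matrix: the supremum of the absolute values
of its eigenvalues. -/
def specRad (p : ℕ) (A : Matrix (Fin p) (Fin p) ℂ) : ℝ :=
  sSup ((fun z => ‖z‖) '' spectrum ℂ A)

/-- The matrix of atoms at `0`, `μ(0) = (μ^{i,j}({0}))_{i,j}`, viewed as a complex matrix. -/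
def atomMat {p : ℕ} (μ : Fin p → Fin p → Measure ℝ) : Matrix (Fin p) (Fin p) ℂ :=
  Matrix.of fun i j => ((μ i j {0}).toReal : ℂ)

/-- The Laplace transform `Lμ(z)` of a matrix of measures. -/
def lapT {p : ℕ} (μ : Fin p → Fin p → Measure ℝ) (z : ℂ) : Matrix (Fin p) (Fin p) ℂ :=
  Matrix.of fun i j => ∫ x, Complex.exp (-z * x) ∂(μ i j)

/-- The domain `D(Lμ)` of the Laplace transform. -/
def LTdom {p : ℕ} (μ : Fin p → Fin p → Measure ℝ) : Set ℂ :=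
  {z | ∀ i j, Integrable (fun x => Real.exp (-z.re * x)) (μ i j)}

/-- Matrix convolution of two matrices of measures:
`(μ*ν)^{i,j} = Σ_k μ^{i,k} * ν^{k,j}`. -/
def mconv {p : ℕ} (μ ν : Fin p → Fin p → Measure ℝ) : Fin p → Fin p → Measure ℝ :=
  fun i j => ∑ k, (μ i k).conv (ν k j)

/-- Matrix convolution powers: `μ^{*0} = I_p δ_0`, `μ^{*(n+1)} = μ * μ^{*n}`. -/
def mconvPow {p : ℕ} (μ : Fin p → Fin p → Measure ℝ) : ℕ → Fin p → Fin p → Measure ℝ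
  | 0 => fun i j => if i = j then Measure.dirac 0 else 0
  | n + 1 => mconv μ (mconvPow μ n)

/-- The Markov renewal measure `U = Σ_{n ≥ 0} μ^{*n}`. -/
def renewal {p : ℕ} (μ : Fin p → Fin p → Measure ℝ) : Fin p → Fin p → Measure ℝ :=
  fun i j => Measure.sum fun n => mconvPow μ n i j

/-- `Λ = {z ∈ D(Lμ) : det(I_p - Lμ(z)) = 0}`. -/
def LambdaSet {p : ℕ} (μ : Fin p → Fin p → Measure ℝ) : Set ℂ :=
  {z ∈ LTdom μ | Matrix.det (1 - lapT μ z) = 0}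

open scoped ENNReal NNReal

namespace MalthusAux

attribute [local instance] Matrix.linftyOpNormedRing Matrix.linftyOpNormedAlgebra
  Matrix.linftyOpNormedAddCommGroup Matrix.linftyOpNormedSpace

variable {p : ℕ}

abbrev Mat (p : ℕ) := Matrix (Fin p) (Fin p) ℂ

local instance : CompleteSpace (Mat p) :=
  FiniteDimensional.complete ℂ (Mat p)

lemma mem_spectrum_iff_det {A : Mat p} {z : ℂ} :
    z ∈ spectrum ℂ A ↔ (z • (1 : Mat p) - A).det = 0 := by
  rw [spectrum.mem_iff, Algebra.algebraMap_eq_smul_one, Matrix.isUnit_iff_isUnit_det,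
    isUnit_iff_ne_zero, not_not]

lemma bddAbove_abs_spectrum (A : Mat p) : BddAbove ((fun z => ‖z‖) '' spectrum ℂ A) :=
  ((spectrum.isCompact A).image continuous_norm).bddAbove

lemma abs_le_specRad [NeZero p] {A : Mat p} {z : ℂ} (hz : z ∈ spectrum ℂ A) :
    ‖z‖ ≤ specRad p A := le_csSup (bddAbove_abs_spectrum A) ⟨z, hz, rfl⟩

lemma exists_abs_eq_specRad [NeZero p] (A : Mat p) :
    ∃ z ∈ spectrum ℂ A, ‖z‖ = specRad p A := by
  have h1 : ((fun z => ‖z‖) '' spectrum ℂ A).Nonempty :=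
    (spectrum.nonempty A).image _
  have h2 : IsCompact ((fun z => ‖z‖) '' spectrum ℂ A) :=
    (spectrum.isCompact A).image continuous_norm
  obtain ⟨z, hz, hz2⟩ := h2.sSup_mem h1
  exact ⟨z, hz, hz2⟩

lemma specRad_nonneg [NeZero p] (A : Mat p) : 0 ≤ specRad p A := by
  obtain ⟨z, _, hz⟩ := exists_abs_eq_specRad A
  rw [← hz]; exact norm_nonneg _

lemma exists_eigenvector {A : Mat p} {z : ℂ}
    (hz : (z • (1 : Mat p) - A).det = 0) :
    ∃ v : Fin p → ℂ, A.mulVec v = z • v ∧ v ≠ 0 := by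
  obtain ⟨v, hv0, hv⟩ := (Matrix.exists_mulVec_eq_zero_iff).mpr hz
  refine ⟨v, ?_, hv0⟩
  rw [Matrix.sub_mulVec, Matrix.smul_mulVec, Matrix.one_mulVec, sub_eq_zero] at hv
  exact hv.symm

lemma pow_mulVec_eigen {A : Mat p} {z : ℂ} {v : Fin p → ℂ}
    (hv : A.mulVec v = z • v) (n : ℕ) : (A ^ n).mulVec v = z ^ n • v := by
  induction n with
  | zero => simp [Matrix.one_mulVec]
  | succ n ih =>
      rw [pow_succ', ← Matrix.mulVec_mulVec, ih, Matrix.mulVec_smul, hv, smul_smul, pow_succ',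
        mul_comm]

lemma abs_pow_le_norm_pow {A : Mat p} {z : ℂ}
    (hz : z ∈ spectrum ℂ A) (n : ℕ) : ‖z‖ ^ n ≤ ‖A ^ n‖ := by
  have hdet : (z • (1 : Mat p) - A).det = 0 := mem_spectrum_iff_det.mp hz
  obtain ⟨v, hv, hv0⟩ := exists_eigenvector hdet
  have h1 : (A ^ n).mulVec v = z ^ n • v := pow_mulVec_eigen hv n
  have h2 : ‖(A ^ n).mulVec v‖ ≤ ‖A ^ n‖ * ‖v‖ := Matrix.linfty_opNorm_mulVec _ _
  rw [h1, norm_smul] at h2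
  have hvpos : 0 < ‖v‖ := norm_pos_iff.mpr hv0
  have := le_of_mul_le_mul_right h2 hvpos
  simpa [norm_pow] using this

lemma spectralRadius_eq [NeZero p] (A : Mat p) :
    spectralRadius ℂ A = ENNReal.ofReal (specRad p A) := by
  apply le_antisymm
  · rw [spectralRadius]
    refine iSup₂_le fun k hk => ?_
    have h1 : ‖k‖ ≤ specRad p A := by
      simpa using abs_le_specRad hk
    have h2 : (‖k‖₊ : ℝ≥0∞) = ENNReal.ofReal ‖k‖ := by
      rw [ENNReal.ofReal, ENNReal.coe_inj,
        Real.toNNReal_eq_nnnorm_of_nonneg (norm_nonneg _), nnnorm_norm]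
    rw [h2]
    exact ENNReal.ofReal_le_ofReal h1
  · obtain ⟨z, hz, habs⟩ := exists_abs_eq_specRad A
    have h1 : ENNReal.ofReal (specRad p A) = (‖z‖₊ : ℝ≥0∞) := by
      rw [← habs, ENNReal.ofReal, ENNReal.coe_inj,
        Real.toNNReal_eq_nnnorm_of_nonneg (norm_nonneg _), nnnorm_norm]
    rw [h1, spectralRadius]
    exact le_iSup₂ (f := fun k _ => (‖k‖₊ : ℝ≥0∞)) z hz

lemma tendsto_norm_pow_rpow [NeZero p] (A : Mat p) :
    Tendsto (fun n : ℕ => ‖A ^ n‖ ^ (1 / (n : ℝ))) atTop (𝓝 (specRad p A)) := by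
  have h := spectrum.pow_norm_pow_one_div_tendsto_nhds_spectralRadius A
  rw [spectralRadius_eq] at h
  have hne : ENNReal.ofReal (specRad p A) ≠ ⊤ := ENNReal.ofReal_ne_top
  have h2 := (ENNReal.tendsto_toReal hne).comp h
  have h3 : (fun n : ℕ => (ENNReal.ofReal (‖A ^ n‖ ^ (1 / (n:ℝ)))).toReal)
      = fun n : ℕ => ‖A ^ n‖ ^ (1 / (n : ℝ)) := by
    funext n
    exact ENNReal.toReal_ofReal (Real.rpow_nonneg (norm_nonneg _) _)
  rw [Function.comp_def, h3, ENNReal.toReal_ofReal (specRad_nonneg A)] at h2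
  exact h2

lemma tendsto_norm_pow_div [NeZero p] (A : Mat p) {z : ℝ} (hz : specRad p A < z) :
    Tendsto (fun n : ℕ => ‖A ^ n‖ / z ^ n) atTop (𝓝 0) := by
  set c : ℝ := (specRad p A + z) / 2 with hc
  have hc1 : specRad p A < c := by simp [hc]; linarith
  have hc2 : c < z := by simp [hc]; linarith
  have hc0 : 0 < c := lt_of_le_of_lt (specRad_nonneg A) hc1
  have hz0 : 0 < z := hc0.trans hc2
  have hev : ∀ᶠ n : ℕ in atTop, ‖A ^ n‖ ≤ c ^ n := by
    have h1 := (tendsto_norm_pow_rpow A).eventually_lt_const hc1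
    filter_upwards [h1, eventually_ge_atTop 1] with n hn hn1
    have h2 : (‖A ^ n‖ ^ (1 / (n:ℝ))) ^ (n : ℕ) ≤ c ^ n :=
      pow_le_pow_left₀ (Real.rpow_nonneg (norm_nonneg _) _) hn.le n
    rwa [one_div, Real.rpow_inv_natCast_pow (norm_nonneg _) (by omega)] at h2
  have hq : Tendsto (fun n : ℕ => (c / z) ^ n) atTop (𝓝 0) :=
    tendsto_pow_atTop_nhds_zero_of_lt_one (by positivity) ((div_lt_one hz0).mpr hc2)
  apply squeeze_zero' (g := fun n : ℕ => (c / z) ^ n)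
  · filter_upwards with n; positivity
  · filter_upwards [hev] with n hn
    rw [div_pow]
    gcongr
  · exact hq


/-- Matrices with (entrywise) nonnegative real entries. -/
def MNonneg {p : ℕ} (A : Mat p) : Prop := ∀ i j, (A i j).im = 0 ∧ 0 ≤ (A i j).re

lemma MNonneg.norm_eq_re {A : Mat p} (hA : MNonneg A) (i j : Fin p) :
    ‖A i j‖ = (A i j).re := by
  obtain ⟨h1, h2⟩ := hA i j
  have h3 : A i j = ((A i j).re : ℂ) := by simp [Complex.ext_iff, h1]
  rw [h3, Complex.norm_real, Real.norm_of_nonneg h2, Complex.ofReal_re]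

lemma MNonneg.one : MNonneg (1 : Mat p) := by
  intro i j
  by_cases h : i = j <;> simp [Matrix.one_apply, h]

lemma mul_apply_re {X Y : Mat p} (hX : MNonneg X) (hY : MNonneg Y) (i j : Fin p) :
    ((X * Y) i j).re = ∑ k, (X i k).re * (Y k j).re := by
  rw [Matrix.mul_apply, Complex.re_sum]
  refine Finset.sum_congr rfl fun k _ => ?_
  rw [Complex.mul_re, (hX i k).1, (hY k j).1]
  ring

lemma MNonneg.mul {X Y : Mat p} (hX : MNonneg X) (hY : MNonneg Y) : MNonneg (X * Y) := by
  intro i j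
  constructor
  · rw [Matrix.mul_apply, Complex.im_sum]
    refine Finset.sum_eq_zero fun k _ => ?_
    rw [Complex.mul_im, (hX i k).1, (hY k j).1]
    ring
  · rw [mul_apply_re hX hY]
    exact Finset.sum_nonneg fun k _ => mul_nonneg (hX i k).2 (hY k j).2

lemma MNonneg.pow {X : Mat p} (hX : MNonneg X) (n : ℕ) : MNonneg (X ^ n) := by
  induction n with
  | zero => simpa [pow_zero] using MNonneg.one
  | succ n ih => rw [pow_succ]; exact ih.mul hX

lemma entry_norm_le_norm (A : Mat p) (i j : Fin p) : ‖A i j‖ ≤ ‖A‖ := by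
  have h1 : ‖A i j‖₊ ≤ ‖A‖₊ := by
    rw [Matrix.linfty_opNNNorm_def]
    exact le_trans
      (Finset.single_le_sum (f := fun j => ‖A i j‖₊) (fun k _ => zero_le) (Finset.mem_univ j))
      (Finset.le_sup (f := fun i => ∑ j, ‖A i j‖₊) (Finset.mem_univ i))
  exact_mod_cast h1

lemma norm_le_sum_entries (A : Mat p) : ‖A‖ ≤ ∑ i, ∑ j, ‖A i j‖ := by
  have h1 : ‖A‖₊ ≤ ∑ i, ∑ j, ‖A i j‖₊ := by
    rw [Matrix.linfty_opNNNorm_def]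
    exact Finset.sup_le fun i _ =>
      Finset.single_le_sum (f := fun i => ∑ j, ‖A i j‖₊) (fun k _ => zero_le)
        (Finset.mem_univ i)
  calc ‖A‖ ≤ ((∑ i, ∑ j, ‖A i j‖₊ : ℝ≥0) : ℝ) := by exact_mod_cast h1
    _ = ∑ i, ∑ j, ‖A i j‖ := by push_cast; rfl

lemma row_sum_le_norm (A : Mat p) (i : Fin p) : ∑ j, ‖A i j‖ ≤ ‖A‖ := by
  have h1 : (∑ j, ‖A i j‖₊) ≤ ‖A‖₊ := by
    rw [Matrix.linfty_opNNNorm_def]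
    exact Finset.le_sup (f := fun i => ∑ j, ‖A i j‖₊) (Finset.mem_univ i)
  calc ∑ j, ‖A i j‖ = ((∑ j, ‖A i j‖₊ : ℝ≥0) : ℝ) := by push_cast; rfl
    _ ≤ ‖A‖ := by exact_mod_cast h1

lemma norm_le_of_entry_le {A B : Mat p} (h : ∀ i j, ‖A i j‖ ≤ ‖B i j‖) : ‖A‖ ≤ ‖B‖ := by
  have h1 : ‖A‖₊ ≤ ‖B‖₊ := by
    rw [Matrix.linfty_opNNNorm_def, Matrix.linfty_opNNNorm_def]
    refine Finset.sup_mono_fun fun i _ => Finset.sum_le_sum fun j _ => ?_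
    exact h i j
  exact_mod_cast h1

lemma pow_entry_dominated {A B : Mat p} (hB : MNonneg B)
    (h : ∀ i j, ‖A i j‖ ≤ (B i j).re) (n : ℕ) :
    ∀ i j, ‖(A ^ n) i j‖ ≤ ((B ^ n) i j).re := by
  induction n with
  | zero =>
      intro i j
      by_cases hij : i = j <;> simp [pow_zero, Matrix.one_apply, hij]
  | succ n ih =>
      intro i j
      rw [pow_succ, pow_succ, Matrix.mul_apply, mul_apply_re (hB.pow n) hB]
      calc ‖∑ k, (A ^ n) i k * A k j‖ ≤ ∑ k, ‖(A ^ n) i k * A k j‖ :=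
            norm_sum_le _ _
        _ ≤ ∑ k, ((B ^ n) i k).re * (B k j).re := by
            refine Finset.sum_le_sum fun k _ => ?_
            rw [norm_mul]
            exact mul_le_mul (ih i k) (h k j) (norm_nonneg _)
              ((hB.pow n) i k).2
        _ = _ := rfl

lemma norm_pow_le_of_dominated {A B : Mat p} (hB : MNonneg B)
    (h : ∀ i j, ‖A i j‖ ≤ (B i j).re) (n : ℕ) : ‖A ^ n‖ ≤ ‖B ^ n‖ := by
  refine norm_le_of_entry_le fun i j => ?_
  rw [(hB.pow n).norm_eq_re i j]
  exact pow_entry_dominated hB h n i j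

lemma specRad_le_of_dominated [NeZero p] {A B : Mat p} (hB : MNonneg B)
    (h : ∀ i j, ‖A i j‖ ≤ (B i j).re) : specRad p A ≤ specRad p B := by
  obtain ⟨z, hz, habs⟩ := exists_abs_eq_specRad A
  rw [← habs]
  refine ge_of_tendsto (tendsto_norm_pow_rpow B) ?_
  filter_upwards [eventually_ge_atTop 1] with n hn
  have h1 : ‖z‖ ^ n ≤ ‖B ^ n‖ :=
    le_trans (abs_pow_le_norm_pow hz n) (norm_pow_le_of_dominated hB h n)
  have h2 := Real.rpow_le_rpow (by positivity) h1 (by positivity : (0:ℝ) ≤ 1 / (n:ℝ))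
  rwa [← Real.rpow_natCast ‖z‖ n, ← Real.rpow_mul (norm_nonneg _),
    mul_one_div, div_self (by positivity : (n:ℝ) ≠ 0), Real.rpow_one] at h2


lemma tendsto_rpow_one_div_nat {K : ℝ} (hK : 0 < K) :
    Tendsto (fun n : ℕ => K ^ (1 / (n : ℝ))) atTop (𝓝 1) := by
  have h1 : Tendsto (fun n : ℕ => 1 / (n : ℝ)) atTop (𝓝 0) :=
    tendsto_one_div_atTop_nhds_zero_nat
  have h2 : ContinuousAt (fun y : ℝ => K ^ y) 0 :=
    Real.continuousAt_const_rpow hK.ne'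
  have h3 := h2.tendsto.comp h1
  simpa [Function.comp_def] using h3

lemma le_specRad_of_subinvariant [NeZero p] {B : Mat p} (hB : MNonneg B)
    {x : Fin p → ℝ} (hx : ∀ i, 0 ≤ x i) (hx0 : x ≠ 0) {c : ℝ}
    (h : ∀ i, c * x i ≤ ∑ j, (B i j).re * x j) : c ≤ specRad p B := by
  rcases le_or_gt c 0 with hc | hc
  · exact hc.trans (specRad_nonneg B)
  have key : ∀ n : ℕ, ∀ i, c ^ n * x i ≤ ∑ j, ((B ^ n) i j).re * x j := by
    intro n
    induction n with
    | zero =>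
        intro i
        simp only [pow_zero, one_mul]
        have : ∑ j, ((1 : Mat p) i j).re * x j = x i := by
          rw [Finset.sum_eq_single i]
          · simp [Matrix.one_apply]
          · intro b _ hb; simp [Matrix.one_apply, (Ne.symm hb)]
          · intro hi; exact absurd (Finset.mem_univ i) hi
        rw [this]
    | succ n ih =>
        intro i
        have e1 : ∑ j, ((B ^ (n + 1)) i j).re * x j
            = ∑ k, (B i k).re * (∑ j, ((B ^ n) k j).re * x j) := by
          have : (B : Mat p) ^ (n + 1) = B * B ^ n := by rw [pow_succ']
          rw [this]
          simp only [mul_apply_re hB (hB.pow n), Finset.sum_mul, Finset.mul_sum]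
          rw [Finset.sum_comm]
          refine Finset.sum_congr rfl fun k _ => Finset.sum_congr rfl fun j _ => by ring
        rw [e1]
        refine le_trans ?_ (Finset.sum_le_sum fun k _ =>
          mul_le_mul_of_nonneg_left (ih k) (hB i k).2)
        have e2 : ∑ k, (B i k).re * (c ^ n * x k) = c ^ n * ∑ k, (B i k).re * x k := by
          rw [Finset.mul_sum]
          exact Finset.sum_congr rfl fun k _ => by ring
        rw [e2]
        calc c ^ (n + 1) * x i = c ^ n * (c * x i) := by ring
          _ ≤ c ^ n * ∑ k, (B i k).re * x k :=
              mul_le_mul_of_nonneg_left (h i) (by positivity)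
  obtain ⟨i0, hi0⟩ : ∃ i, x i ≠ 0 := Function.ne_iff.mp hx0
  have hxi : 0 < x i0 := (hx i0).lt_of_ne (Ne.symm hi0)
  have hM0 : 0 < ‖x‖ := norm_pos_iff.mpr hx0
  have hbound : ∀ n, c ^ n * x i0 ≤ ‖B ^ n‖ * ‖x‖ := by
    intro n
    calc c ^ n * x i0 ≤ ∑ j, ((B ^ n) i0 j).re * x j := key n i0
      _ ≤ ∑ j, ‖(B ^ n) i0 j‖ * ‖x‖ := by
          refine Finset.sum_le_sum fun j _ => ?_
          rw [(hB.pow n).norm_eq_re i0 j]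
          exact mul_le_mul_of_nonneg_left
            (le_trans (le_abs_self _) (norm_le_pi_norm x j)) ((hB.pow n) i0 j).2
      _ = (∑ j, ‖(B ^ n) i0 j‖) * ‖x‖ := (Finset.sum_mul _ _ _).symm
      _ ≤ ‖B ^ n‖ * ‖x‖ := mul_le_mul_of_nonneg_right (row_sum_le_norm _ i0) hM0.le
  set K : ℝ := ‖x‖ / x i0 with hKdef
  have hK : 0 < K := by positivity
  have hlim : Tendsto (fun n : ℕ => ‖B ^ n‖ ^ (1 / (n:ℝ)) * K ^ (1 / (n:ℝ))) atTop
      (𝓝 (specRad p B)) := by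
    have := (tendsto_norm_pow_rpow B).mul (tendsto_rpow_one_div_nat hK)
    simpa using this
  refine ge_of_tendsto hlim ?_
  filter_upwards [eventually_ge_atTop 1] with n hn
  have h1 : c ^ n ≤ ‖B ^ n‖ * K := by
    have h2 := hbound n
    have h3 : c ^ n * x i0 ≤ ‖B ^ n‖ * K * x i0 := by
      have h4 : ‖B ^ n‖ * K * x i0 = ‖B ^ n‖ * ‖x‖ := by
        rw [hKdef]; field_simp
      rw [h4]; exact h2
    exact le_of_mul_le_mul_right h3 hxi
  have h2 := Real.rpow_le_rpow (by positivity) h1 (by positivity : (0:ℝ) ≤ 1 / (n:ℝ))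
  have hBn : (0:ℝ) ≤ ‖B ^ n‖ := norm_nonneg _
  rwa [← Real.rpow_natCast c n, ← Real.rpow_mul hc.le, mul_one_div,
    div_self (by positivity : (n:ℝ) ≠ 0), Real.rpow_one,
    Real.mul_rpow hBn hK.le] at h2

lemma specRad_lt_one_of_norm_pow_lt_one [NeZero p] {A : Mat p} {N : ℕ} (hN : N ≠ 0)
    (h : ‖A ^ N‖ < 1) : specRad p A < 1 := by
  obtain ⟨z, hz, habs⟩ := exists_abs_eq_specRad A
  rw [← habs]
  by_contra hge
  push_neg at hge
  have h1 : (1:ℝ) ≤ ‖z‖ ^ N := one_le_pow₀ hge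
  exact absurd (le_trans h1 (abs_pow_le_norm_pow hz N)) (not_le.mpr h)

lemma exists_norm_pow_lt_one [NeZero p] {A : Mat p} (h : specRad p A < 1) :
    ∃ N : ℕ, N ≠ 0 ∧ ‖A ^ N‖ < 1 := by
  have h1 := tendsto_norm_pow_div A h
  have h2 : ∀ᶠ n : ℕ in atTop, ‖A ^ n‖ / (1:ℝ) ^ n < 1 :=
    h1.eventually_lt_const one_pos
  obtain ⟨N, hN1, hN2⟩ := (h2.and (eventually_ge_atTop 1)).exists
  exact ⟨N, by omega, by simpa using hN1⟩


lemma det_tendsto {M : ℕ → Mat p} {A : Mat p}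
    (h : ∀ i j, Tendsto (fun k => M k i j) atTop (𝓝 (A i j))) :
    Tendsto (fun k => (M k).det) atTop (𝓝 A.det) := by
  simp only [Matrix.det_apply']
  refine tendsto_finset_sum _ fun σ _ => ?_
  exact (tendsto_finset_prod _ fun i _ => h (σ i) i).const_mul _

lemma adjugate_tendsto {M : ℕ → Mat p} {A : Mat p}
    (h : ∀ i j, Tendsto (fun k => M k i j) atTop (𝓝 (A i j))) (i j : Fin p) :
    Tendsto (fun k => (M k).adjugate i j) atTop (𝓝 (A.adjugate i j)) := by
  simp only [Matrix.adjugate_apply]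
  refine det_tendsto fun i' j' => ?_
  simp only [Matrix.updateRow_apply]
  by_cases hij : i' = j <;> simp [hij, tendsto_const_nhds, h i' j']

lemma inv_entry_tendsto {M : ℕ → Mat p} {A : Mat p}
    (h : ∀ i j, Tendsto (fun k => M k i j) atTop (𝓝 (A i j)))
    (hdet : A.det ≠ 0) (i j : Fin p) :
    Tendsto (fun k => (M k)⁻¹ i j) atTop (𝓝 (A⁻¹ i j)) := by
  have e : ∀ (X : Mat p), X⁻¹ i j = (X.det)⁻¹ * X.adjugate i j := by
    intro X
    rw [Matrix.inv_def, Matrix.smul_apply, Ring.inverse_eq_inv', smul_eq_mul]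
  simp only [e]
  exact ((det_tendsto h).inv₀ hdet).mul (adjugate_tendsto h i j)


lemma weak_perron_frobenius [NeZero p] {B : Mat p} (hB : MNonneg B)
    (h1 : specRad p B = 1) : ((1 : Mat p) - B).det = 0 := by
  by_contra hdet
  -- the approximating scalars
  set z : ℕ → ℝ := fun k => 1 + 1 / ((k : ℝ) + 1) with hzdef
  have hz1 : ∀ k, 1 < z k := fun k => by
    have : (0:ℝ) < 1 / ((k:ℝ) + 1) := by positivity
    simp only [hzdef]; linarith
  have hz0 : ∀ k, (0:ℝ) < z k := fun k => lt_trans one_pos (hz1 k)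
  have hzc0 : ∀ k, ((z k : ℂ)) ≠ 0 := fun k => by
    simpa using Complex.ofReal_ne_zero.mpr (hz0 k).ne'
  have hzlim : Tendsto z atTop (𝓝 1) := by
    have h0 : Tendsto (fun k : ℕ => 1 / ((k:ℝ) + 1)) atTop (𝓝 0) :=
      tendsto_one_div_add_atTop_nhds_zero_nat
    have h3 := tendsto_const_nhds.add h0 (f := fun _ : ℕ => (1:ℝ))
    rw [hzdef]
    simpa using h3
  set M : ℕ → Mat p := fun k => (z k : ℂ) • 1 - B with hMdef
  have hdetM : ∀ k, (M k).det ≠ 0 := by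
    intro k hk
    have hmem : ((z k : ℂ)) ∈ spectrum ℂ B := mem_spectrum_iff_det.mpr hk
    have hle := abs_le_specRad hmem
    rw [h1, Complex.norm_real, Real.norm_eq_abs, abs_of_pos (hz0 k)] at hle
    exact absurd hle (not_le.mpr (hz1 k))
  have hunit : ∀ k, IsUnit (M k).det := fun k => isUnit_iff_ne_zero.mpr (hdetM k)
  set S : ℕ → Mat p := fun k => (M k)⁻¹ with hSdef
  have hMS : ∀ k, M k * S k = 1 := fun k => Matrix.mul_nonsing_inv _ (hunit k)
  have hSM : ∀ k, S k * M k = 1 := fun k => Matrix.nonsing_inv_mul _ (hunit k)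
  -- partial sum identity
  have hpart : ∀ k N, M k * (∑ n ∈ Finset.range N, ((z k : ℂ))⁻¹ ^ (n + 1) • B ^ n)
      = 1 - ((z k : ℂ))⁻¹ ^ N • B ^ N := by
    intro k N
    induction N with
    | zero => simp
    | succ N ih =>
        rw [Finset.sum_range_succ, Matrix.mul_add, ih]
        have e : M k * (((z k : ℂ))⁻¹ ^ (N + 1) • B ^ N)
            = ((z k : ℂ))⁻¹ ^ N • B ^ N - ((z k : ℂ))⁻¹ ^ (N + 1) • B ^ (N + 1) := by
          have e2 : ((z k : ℂ))⁻¹ ^ (N + 1) * (z k : ℂ) = ((z k : ℂ))⁻¹ ^ N := by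
            rw [pow_succ, mul_assoc, inv_mul_cancel₀ (hzc0 k), mul_one]
          have e3 : B * B ^ N = B ^ (N + 1) := (pow_succ' B N).symm
          rw [mul_smul_comm, hMdef]
          rw [Matrix.sub_mul, Matrix.smul_mul, Matrix.one_mul, smul_sub, smul_smul, e2, e3]
        rw [e]
        abel
  -- S k = partial + correction
  have hSkey : ∀ k N, (∑ n ∈ Finset.range N, ((z k : ℂ))⁻¹ ^ (n + 1) • B ^ n)
      = S k - ((z k : ℂ))⁻¹ ^ N • (S k * B ^ N) := by
    intro k N
    have e1 : S k * (M k * (∑ n ∈ Finset.range N, ((z k : ℂ))⁻¹ ^ (n + 1) • B ^ n))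
        = ∑ n ∈ Finset.range N, ((z k : ℂ))⁻¹ ^ (n + 1) • B ^ n := by
      rw [← Matrix.mul_assoc, hSM, Matrix.one_mul]
    rw [hpart k N] at e1
    rw [← e1, Matrix.mul_sub, Matrix.mul_one, Matrix.mul_smul]
  -- entrywise: partial sums converge to entries of S k, as N → ∞
  have hcorr : ∀ k, Tendsto (fun N : ℕ => ‖((z k : ℂ))⁻¹ ^ N • (S k * B ^ N)‖) atTop (𝓝 0) := by
    intro k
    have hsr : specRad p B < z k := by rw [h1]; exact hz1 k
    have h2 := (tendsto_norm_pow_div B hsr).const_mul ‖S k‖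
    rw [mul_zero] at h2
    apply squeeze_zero (fun N => norm_nonneg _) _ h2
    intro N
    rw [norm_smul]
    calc ‖((z k : ℂ))⁻¹ ^ N‖ * ‖S k * B ^ N‖
        ≤ ‖((z k : ℂ))⁻¹ ^ N‖ * (‖S k‖ * ‖B ^ N‖) := by
          exact mul_le_mul_of_nonneg_left (norm_mul_le _ _) (norm_nonneg _)
      _ = ‖S k‖ * (‖B ^ N‖ / z k ^ N) := by
          rw [norm_pow, norm_inv, Complex.norm_real, Real.norm_of_nonneg (hz0 k).le,
            div_eq_mul_inv, ← inv_pow]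
          ring
  -- limits of entries of M k and S k as k → ∞
  have hMent : ∀ i j, Tendsto (fun k => M k i j) atTop (𝓝 (((1 : Mat p) - B) i j)) := by
    intro i j
    have h5 : Tendsto (fun k => ((z k : ℝ) : ℂ)) atTop (𝓝 ((1:ℝ) : ℂ)) :=
      (Complex.continuous_ofReal.tendsto 1).comp hzlim
    have h6 := (h5.mul (tendsto_const_nhds (x := (1 : Mat p) i j))).sub
      (tendsto_const_nhds (x := B i j))
    have h7 : ∀ k, M k i j = (z k : ℂ) * (1 : Mat p) i j - B i j := by
      intro k
      rw [hMdef]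
      simp [Matrix.sub_apply, Matrix.smul_apply, smul_eq_mul]
    have h8 : ((1 : Mat p) - B) i j = ((1:ℝ) : ℂ) * (1 : Mat p) i j - B i j := by
      simp [Matrix.sub_apply]
    rw [h8]
    simpa only [h7] using h6
  have hSent : ∀ i j, Tendsto (fun k => S k i j) atTop (𝓝 (((1 : Mat p) - B)⁻¹ i j)) :=
    fun i j => inv_entry_tendsto hMent hdet i j
  -- entries of B ^ n tend to 0
  have hentry : ∀ i j, Tendsto (fun n => ((B ^ n) i j).re) atTop (𝓝 0) := by
    intro i j
    have ha0 : ∀ n, 0 ≤ ((B ^ n) i j).re := fun n => ((hB.pow n) i j).2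
    obtain ⟨C, hC⟩ : ∃ C, ∀ k, ((S k) i j).re ≤ C := by
      obtain ⟨C, hC⟩ := ((Complex.continuous_re.tendsto _).comp (hSent i j)).bddAbove_range
      exact ⟨C, fun k => hC ⟨k, rfl⟩⟩
    -- partial sums are bounded by C
    have hpartial : ∀ N, ∑ n ∈ Finset.range N, ((B ^ n) i j).re ≤ C := by
      intro N
      -- for fixed k : F k N ≤ re (S k i j) ≤ C
      have hF : ∀ k N, ∑ n ∈ Finset.range N, (z k)⁻¹ ^ (n + 1) * ((B ^ n) i j).re
          = ((S k) i j).re - ((((z k : ℂ))⁻¹ ^ N • (S k * B ^ N)) i j).re := by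
        intro k N
        have e1 := congrArg (fun X : Mat p => (X i j).re) (hSkey k N)
        simp only [Matrix.sum_apply, Matrix.sub_apply, Matrix.smul_apply, smul_eq_mul,
          Complex.re_sum, Complex.sub_re] at e1
        simp only [Matrix.smul_apply, smul_eq_mul]
        rw [← e1]
        refine Finset.sum_congr rfl fun n _ => ?_
        rw [show ((z k : ℂ))⁻¹ ^ (n + 1) = (((z k)⁻¹ ^ (n + 1) : ℝ) : ℂ) by push_cast; ring,
          Complex.re_ofReal_mul]
      have hFmono : ∀ k, Monotone (fun N => ∑ n ∈ Finset.range N,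
          (z k)⁻¹ ^ (n + 1) * ((B ^ n) i j).re) := by
        intro k
        apply monotone_nat_of_le_succ
        intro N
        rw [Finset.sum_range_succ]
        have : 0 ≤ (z k)⁻¹ ^ (N + 1) * ((B ^ N) i j).re :=
          mul_nonneg (by positivity) (ha0 N)
        linarith
      have hFtends : ∀ k, Tendsto (fun N => ∑ n ∈ Finset.range N,
          (z k)⁻¹ ^ (n + 1) * ((B ^ n) i j).re) atTop (𝓝 (((S k) i j).re)) := by
        intro k
        have hcz : Tendsto (fun N : ℕ => ((((z k : ℂ))⁻¹ ^ N • (S k * B ^ N)) i j).re)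
            atTop (𝓝 0) := by
          apply squeeze_zero_norm _ (hcorr k)
          intro N
          exact le_trans (Complex.abs_re_le_norm _) (entry_norm_le_norm _ i j)
        have := (tendsto_const_nhds (x := ((S k) i j).re)).sub hcz
        rw [sub_zero] at this
        simpa only [hF k] using this
      have hFle : ∀ k N, ∑ n ∈ Finset.range N, (z k)⁻¹ ^ (n + 1) * ((B ^ n) i j).re ≤ C :=
        fun k N => le_trans ((hFmono k).ge_of_tendsto (hFtends k) N) (hC k)
      -- let k → ∞ for fixed N
      have hzk : Tendsto (fun k => (z k)⁻¹) atTop (𝓝 1) := by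
        have := hzlim.inv₀ one_ne_zero
        simpa using this
      have hlimN : Tendsto (fun k => ∑ n ∈ Finset.range N,
          (z k)⁻¹ ^ (n + 1) * ((B ^ n) i j).re) atTop
          (𝓝 (∑ n ∈ Finset.range N, ((B ^ n) i j).re)) := by
        have h9 : Tendsto (fun k => ∑ n ∈ Finset.range N,
            (z k)⁻¹ ^ (n + 1) * ((B ^ n) i j).re) atTop
            (𝓝 (∑ n ∈ Finset.range N, (1:ℝ) ^ (n + 1) * ((B ^ n) i j).re)) :=
          tendsto_finset_sum _ fun n _ => ((hzk.pow (n + 1)).mul tendsto_const_nhds)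
        simpa using h9
      exact le_of_tendsto hlimN (Eventually.of_forall fun k => hFle k N)
    have hsummable : Summable (fun n => ((B ^ n) i j).re) :=
      summable_of_sum_range_le ha0 hpartial
    exact hsummable.tendsto_atTop_zero
  -- norms of powers tend to 0
  have hnorm0 : Tendsto (fun n => ‖B ^ n‖) atTop (𝓝 0) := by
    have hsum : Tendsto (fun n => ∑ i : Fin p, ∑ j : Fin p, ((B ^ n) i j).re)
        atTop (𝓝 0) := by
      have := tendsto_finset_sum (Finset.univ : Finset (Fin p)) fun i _ =>
        tendsto_finset_sum (Finset.univ : Finset (Fin p)) fun j _ => hentry i j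
      simpa using this
    apply squeeze_zero (fun n => norm_nonneg _) _ hsum
    intro n
    calc ‖B ^ n‖ ≤ ∑ i, ∑ j, ‖(B ^ n) i j‖ := norm_le_sum_entries _
      _ = ∑ i, ∑ j, ((B ^ n) i j).re :=
          Finset.sum_congr rfl fun i _ => Finset.sum_congr rfl fun j _ =>
            (hB.pow n).norm_eq_re i j
  obtain ⟨N, hN1, hN2⟩ := ((hnorm0.eventually_lt_const one_pos).and (eventually_ge_atTop 1)).exists
  have hlt := specRad_lt_one_of_norm_pow_lt_one (by omega : N ≠ 0) hN1
  rw [h1] at hlt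
  exact lt_irrefl _ hlt


section Measures

variable {μ : Fin p → Fin p → Measure ℝ}

lemma expIntegrable {θ : ℝ} (hθ : (θ : ℂ) ∈ LTdom μ) (i j : Fin p) :
    Integrable (fun x => Real.exp (-θ * x)) (μ i j) := by
  have := hθ i j
  rwa [Complex.ofReal_re] at this

lemma lapT_apply_real (θ : ℝ) (i j : Fin p) :
    lapT μ (θ : ℂ) i j = ((∫ x, Real.exp (-θ * x) ∂(μ i j) : ℝ) : ℂ) := by
  have h : ∀ x : ℝ, Complex.exp (-(θ:ℂ) * x) = ((Real.exp (-θ * x) : ℝ) : ℂ) := by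
    intro x
    rw [Complex.ofReal_exp]
    congr 1
    push_cast
    ring
  show (∫ x, Complex.exp (-(θ:ℂ) * x) ∂(μ i j)) = _
  rw [show (fun x : ℝ => Complex.exp (-(θ:ℂ) * x)) = fun x : ℝ => ((Real.exp (-θ * x) : ℝ) : ℂ)
    from funext h]
  exact integral_ofReal

lemma ae_nonneg (hsupp : ∀ i j, μ i j (Set.Iio 0) = 0) (i j : Fin p) :
    ∀ᵐ x ∂(μ i j), 0 ≤ x := by
  rw [ae_iff]
  have h : {x : ℝ | ¬ 0 ≤ x} = Set.Iio 0 := by ext x; simp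
  rw [h]
  exact hsupp i j

lemma LTdom_mono (hsupp : ∀ i j, μ i j (Set.Iio 0) = 0) {θ θ' : ℝ} (h : θ ≤ θ')
    (hθ : (θ : ℂ) ∈ LTdom μ) : ((θ' : ℂ)) ∈ LTdom μ := by
  intro i j
  rw [Complex.ofReal_re]
  refine Integrable.mono' (expIntegrable hθ i j)
    ((Real.continuous_exp.comp (continuous_const.mul continuous_id)).aestronglyMeasurable) ?_
  filter_upwards [ae_nonneg hsupp i j] with x hx
  rw [Real.norm_of_nonneg (Real.exp_nonneg _)]
  exact Real.exp_le_exp.mpr (by nlinarith)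

lemma MNonneg_lapT (θ : ℝ) : MNonneg (lapT μ (θ : ℂ)) := by
  intro i j
  rw [lapT_apply_real]
  refine ⟨Complex.ofReal_im _, ?_⟩
  rw [Complex.ofReal_re]
  exact integral_nonneg fun x => (Real.exp_pos _).le

lemma lapT_re (θ : ℝ) (i j : Fin p) :
    (lapT μ (θ : ℂ) i j).re = ∫ x, Real.exp (-θ * x) ∂(μ i j) := by
  rw [lapT_apply_real, Complex.ofReal_re]

lemma lapT_entry_mono (hsupp : ∀ i j, μ i j (Set.Iio 0) = 0) {θ θ' : ℝ} (h : θ ≤ θ')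
    (hθ : (θ : ℂ) ∈ LTdom μ) (i j : Fin p) :
    (lapT μ (θ' : ℂ) i j).re ≤ (lapT μ (θ : ℂ) i j).re := by
  rw [lapT_re, lapT_re]
  refine integral_mono_ae (expIntegrable (LTdom_mono hsupp h hθ) i j) (expIntegrable hθ i j) ?_
  filter_upwards [ae_nonneg hsupp i j] with x hx
  exact Real.exp_le_exp.mpr (by nlinarith)

lemma lapT_entry_abs_le {z : ℂ} (i j : Fin p) :
    ‖lapT μ z i j‖ ≤ (lapT μ (z.re : ℂ) i j).re := by
  rw [lapT_re]
  show ‖∫ x, Complex.exp (-z * x) ∂(μ i j)‖ ≤ _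
  refine le_trans (norm_integral_le_integral_norm _) (le_of_eq ?_)
  refine integral_congr_ae (Eventually.of_forall fun x => ?_)
  show ‖Complex.exp (-z * (x:ℂ))‖ = Real.exp (-z.re * x)
  rw [Complex.norm_exp]
  congr 1
  simp [Complex.mul_re]

lemma lapT_entry_tendsto (hsupp : ∀ i j, μ i j (Set.Iio 0) = 0) {θ₀ : ℝ}
    (h0 : (θ₀ : ℂ) ∈ LTdom μ) {t : ℕ → ℝ} (ht : ∀ k, θ₀ ≤ t k) {θs : ℝ}
    (hlim : Tendsto t atTop (𝓝 θs)) (i j : Fin p) :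
    Tendsto (fun k => (lapT μ (t k : ℂ) i j).re) atTop (𝓝 ((lapT μ (θs : ℂ) i j).re)) := by
  simp only [lapT_re]
  refine tendsto_integral_of_dominated_convergence (fun x => Real.exp (-θ₀ * x))
    (fun k => (Real.continuous_exp.comp
      (continuous_const.mul continuous_id)).aestronglyMeasurable)
    (expIntegrable h0 i j) (fun k => ?_) ?_
  · filter_upwards [ae_nonneg hsupp i j] with x hx
    rw [Real.norm_of_nonneg (Real.exp_nonneg _)]
    exact Real.exp_le_exp.mpr (by nlinarith [ht k])
  · refine Eventually.of_forall fun x => ?_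
    have h2 : Tendsto (fun k => -t k * x) atTop (𝓝 (-θs * x)) :=
      (hlim.neg).mul_const x
    exact (Real.continuous_exp.tendsto _).comp h2

lemma lapT_entry_tendsto_atom (hsupp : ∀ i j, μ i j (Set.Iio 0) = 0) {θ₀ : ℝ}
    (h0 : (θ₀ : ℂ) ∈ LTdom μ) (i j : Fin p) :
    Tendsto (fun k : ℕ => (lapT μ ((θ₀ + k : ℝ) : ℂ) i j).re) atTop
      (𝓝 ((atomMat μ i j).re)) := by
  simp only [lapT_re]
  have hatom : (atomMat μ i j).re = ∫ x, Set.indicator {0} (fun _ => (1:ℝ)) x ∂(μ i j) := by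
    rw [MeasureTheory.integral_indicator (measurableSet_singleton 0)]
    simp [atomMat]
  rw [hatom]
  refine tendsto_integral_of_dominated_convergence (fun x => Real.exp (-θ₀ * x))
    (fun k => (Real.continuous_exp.comp
      (continuous_const.mul continuous_id)).aestronglyMeasurable)
    (expIntegrable h0 i j) (fun k => ?_) ?_
  · filter_upwards [ae_nonneg hsupp i j] with x hx
    rw [Real.norm_of_nonneg (Real.exp_nonneg _)]
    refine Real.exp_le_exp.mpr ?_
    have : (0:ℝ) ≤ (k:ℝ) := Nat.cast_nonneg k
    nlinarith
  · filter_upwards [ae_nonneg hsupp i j] with x hx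
    rcases eq_or_lt_of_le hx with hx0 | hx0
    · have : x = 0 := hx0.symm
      subst this
      simp [Set.indicator_of_mem]
    · have hx1 : x ∉ ({0} : Set ℝ) := by simp [hx0.ne']
      rw [Set.indicator_of_notMem hx1]
      have h2 : Tendsto (fun k : ℕ => -(θ₀ + (k:ℝ)) * x) atTop atBot := by
        have h3 : Tendsto (fun k : ℕ => (θ₀ + (k:ℝ)) * x) atTop atTop := by
          have h4 : Tendsto (fun k : ℕ => θ₀ + (k:ℝ)) atTop atTop :=
            tendsto_atTop_add_const_left atTop θ₀ tendsto_natCast_atTop_atTop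
          exact h4.atTop_mul_const hx0
        exact (tendsto_neg_atBot_iff.mpr h3).congr fun k => by ring
      exact Real.tendsto_exp_atBot.comp h2


lemma matrix_tendsto_of_entries {A : ℕ → Mat p} {L : Mat p}
    (h : ∀ i j, Tendsto (fun k => A k i j) atTop (𝓝 (L i j))) :
    Tendsto A atTop (𝓝 L) := by
  apply tendsto_iff_norm_sub_tendsto_zero.mpr
  have hsum : Tendsto (fun k => ∑ i : Fin p, ∑ j : Fin p, ‖(A k - L) i j‖) atTop (𝓝 0) := by
    have h1 : ∀ i j, Tendsto (fun k => ‖(A k - L) i j‖) atTop (𝓝 0) := by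
      intro i j
      have h2 := tendsto_iff_norm_sub_tendsto_zero.mp (h i j)
      simpa [Matrix.sub_apply] using h2
    have h3 := tendsto_finset_sum (Finset.univ : Finset (Fin p)) fun i _ =>
      tendsto_finset_sum (Finset.univ : Finset (Fin p)) fun j _ => h1 i j
    simpa using h3
  exact squeeze_zero (fun k => norm_nonneg _) (fun k => norm_le_sum_entries _) hsum

lemma lapT_entry_eq_ofReal_re (θ : ℝ) (i j : Fin p) :
    lapT μ (θ : ℂ) i j = (((lapT μ (θ : ℂ) i j).re : ℝ) : ℂ) := by
  rw [lapT_apply_real, Complex.ofReal_re]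

lemma lapT_matrix_tendsto (hsupp : ∀ i j, μ i j (Set.Iio 0) = 0) {θ₀ : ℝ}
    (h0 : (θ₀ : ℂ) ∈ LTdom μ) {t : ℕ → ℝ} (ht : ∀ k, θ₀ ≤ t k) {θs : ℝ}
    (hlim : Tendsto t atTop (𝓝 θs)) :
    Tendsto (fun k => lapT μ (t k : ℂ)) atTop (𝓝 (lapT μ (θs : ℂ))) := by
  refine matrix_tendsto_of_entries fun i j => ?_
  have hre := lapT_entry_tendsto hsupp h0 ht hlim i j
  have h1 := (Complex.continuous_ofReal.tendsto _).comp hre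
  rw [lapT_entry_eq_ofReal_re θs i j]
  refine h1.congr fun k => ?_
  exact (lapT_entry_eq_ofReal_re (t k) i j).symm

lemma lapT_matrix_tendsto_atom (hsupp : ∀ i j, μ i j (Set.Iio 0) = 0) {θ₀ : ℝ}
    (h0 : (θ₀ : ℂ) ∈ LTdom μ) :
    Tendsto (fun k : ℕ => lapT μ ((θ₀ + k : ℝ) : ℂ)) atTop (𝓝 (atomMat μ)) := by
  refine matrix_tendsto_of_entries fun i j => ?_
  have hre := lapT_entry_tendsto_atom hsupp h0 i j
  have h1 := (Complex.continuous_ofReal.tendsto _).comp hre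
  have h2 : atomMat μ i j = (((atomMat μ i j).re : ℝ) : ℂ) := by
    simp [atomMat]
  rw [h2]
  refine h1.congr fun k => ?_
  exact (lapT_entry_eq_ofReal_re (θ₀ + k) i j).symm


theorem main (hsupp : ∀ i j, μ i j (Set.Iio 0) = 0)
    (hA2 : specRad p (atomMat μ) < 1)
    (hA3 : ∃ θ : ℝ, (θ : ℂ) ∈ LTdom μ ∧ 1 ≤ specRad p (lapT μ θ)) :
    ∃ α : ℝ, ((α : ℂ) ∈ LTdom μ ∧ Matrix.det (1 - lapT μ α) = 0) ∧
      specRad p (lapT μ α) = 1 ∧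
      ∀ z : ℂ, (z ∈ LTdom μ ∧ Matrix.det (1 - lapT μ z) = 0) → z.re ≤ α := by
  classical
  obtain ⟨θ₀, hθ₀dom, hθ₀ρ⟩ := hA3
  rcases Nat.eq_zero_or_pos p with hp | hp
  · exfalso
    subst hp
    have hempty : spectrum ℂ (lapT μ (θ₀ : ℂ)) = ∅ := by
      ext w
      simp [spectrum.mem_iff, isUnit_of_subsingleton]
    rw [specRad, hempty] at hθ₀ρ
    simp [Real.sSup_empty] at hθ₀ρ
    linarith
  haveI : NeZero p := ⟨hp.ne'⟩
  set S : Set ℝ := {θ | θ₀ ≤ θ ∧ 1 ≤ specRad p (lapT μ (θ : ℂ))} with hSdef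
  have hSne : θ₀ ∈ S := ⟨le_refl _, hθ₀ρ⟩
  have hmono : ∀ {a b : ℝ}, θ₀ ≤ a → a ≤ b →
      specRad p (lapT μ (b : ℂ)) ≤ specRad p (lapT μ (a : ℂ)) := by
    intro a b ha hab
    refine specRad_le_of_dominated (MNonneg_lapT a) fun i j => ?_
    rw [(MNonneg_lapT b).norm_eq_re i j]
    exact lapT_entry_mono hsupp hab (LTdom_mono hsupp ha hθ₀dom) i j
  -- a point where the spectral radius drops below one
  obtain ⟨N₀, hN₀ne, hN₀⟩ := exists_norm_pow_lt_one hA2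
  have hMex : ∃ Mv : ℝ, θ₀ ≤ Mv ∧ specRad p (lapT μ (Mv : ℂ)) < 1 := by
    have htend := lapT_matrix_tendsto_atom hsupp hθ₀dom
    have hpow := ((htend.pow N₀).norm).eventually_lt_const hN₀
    obtain ⟨k, hk⟩ := hpow.exists
    exact ⟨θ₀ + k, le_add_of_nonneg_right (Nat.cast_nonneg k),
      specRad_lt_one_of_norm_pow_lt_one hN₀ne hk⟩
  obtain ⟨Mv, hMv1, hMv2⟩ := hMex
  have hSbdd : BddAbove S := by
    refine ⟨Mv, fun θ hθ => ?_⟩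
    by_contra hgt
    push_neg at hgt
    have h1 := hmono hMv1 hgt.le
    have h2 := hθ.2
    linarith
  set α := sSup S with hαdef
  have hθ₀α : θ₀ ≤ α := le_csSup hSbdd hSne
  have hαdom : ((α : ℝ) : ℂ) ∈ LTdom μ := LTdom_mono hsupp hθ₀α hθ₀dom
  have hαge : 1 ≤ specRad p (lapT μ (α : ℂ)) := by
    by_contra hlt
    push_neg at hlt
    obtain ⟨N, hNne, hN⟩ := exists_norm_pow_lt_one hlt
    have hseq : ∀ k : ℕ, ∃ θ, θ ∈ S ∧ α - 1 / ((k : ℝ) + 1) < θ := by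
      intro k
      have h1 : α - 1 / ((k : ℝ) + 1) < α := by
        have : (0:ℝ) < 1 / ((k : ℝ) + 1) := by positivity
        linarith
      obtain ⟨θ, hθS, hθgt⟩ := exists_lt_of_lt_csSup ⟨θ₀, hSne⟩ h1
      exact ⟨θ, hθS, hθgt⟩
    choose t htS htlt using hseq
    have htle : ∀ k, t k ≤ α := fun k => le_csSup hSbdd (htS k)
    have htlim : Tendsto t atTop (𝓝 α) := by
      have h1 : Tendsto (fun k : ℕ => α - 1 / ((k : ℝ) + 1)) atTop (𝓝 α) := by
        have h2 : Tendsto (fun k : ℕ => 1 / ((k:ℝ) + 1)) atTop (𝓝 0) :=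
          tendsto_one_div_add_atTop_nhds_zero_nat
        have h3 := (tendsto_const_nhds (x := α)).sub h2
        simpa using h3
      exact tendsto_of_tendsto_of_tendsto_of_le_of_le h1 tendsto_const_nhds
        (fun k => (htlt k).le) htle
    have hmt := lapT_matrix_tendsto hsupp hθ₀dom (fun k => (htS k).1) htlim
    have hpow := ((hmt.pow N).norm).eventually_lt_const hN
    obtain ⟨k, hk⟩ := hpow.exists
    have h4 := specRad_lt_one_of_norm_pow_lt_one hNne hk
    have h5 := (htS k).2
    linarith
  have hαle : specRad p (lapT μ (α : ℂ)) ≤ 1 := by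
    by_contra hgt
    push_neg at hgt
    set r := specRad p (lapT μ (α : ℂ)) with hrdef
    obtain ⟨lam, hlam, hlamabs⟩ := exists_abs_eq_specRad (lapT μ (α : ℂ))
    obtain ⟨v, hv, hv0⟩ := exists_eigenvector (mem_spectrum_iff_det.mp hlam)
    set x : Fin p → ℝ := fun i => ‖v i‖ with hxdef
    have hxnn : ∀ i, 0 ≤ x i := fun i => norm_nonneg _
    have hx0 : x ≠ 0 := by
      intro hcontra
      apply hv0
      funext i
      have h1 := congrFun hcontra i
      simpa [hxdef, map_eq_zero] using h1
    have hsub : ∀ i, r * x i ≤ ∑ j, ((lapT μ (α : ℂ)) i j).re * x j := by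
      intro i
      have h1 : ((lapT μ (α : ℂ)).mulVec v) i = lam * v i := by
        rw [hv]
        simp
      have h2 : ((lapT μ (α : ℂ)).mulVec v) i = ∑ j, (lapT μ (α : ℂ)) i j * v j := by
        simp [Matrix.mulVec, dotProduct]
      have h3 : r * x i = ‖∑ j, (lapT μ (α : ℂ)) i j * v j‖ := by
        rw [← h2, h1, norm_mul, hlamabs, hxdef]
      rw [h3]
      calc ‖∑ j, (lapT μ (α : ℂ)) i j * v j‖
          ≤ ∑ j, ‖(lapT μ (α : ℂ)) i j * v j‖ := by
            simpa using
              norm_sum_le (Finset.univ : Finset (Fin p))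
                (fun j => (lapT μ (α : ℂ)) i j * v j)
        _ = ∑ j, ((lapT μ (α : ℂ)) i j).re * x j := by
            refine Finset.sum_congr rfl fun j _ => ?_
            rw [norm_mul, hxdef,
              (MNonneg_lapT α).norm_eq_re i j]
    set c : ℝ := (1 + r) / 2 with hcdef
    have hc1 : 1 < c := by rw [hcdef]; linarith
    have hcr : c < r := by rw [hcdef]; linarith
    set u : ℕ → ℝ := fun k => α + 1 / ((k : ℝ) + 1) with hudef
    have hu0 : ∀ k, θ₀ ≤ u k := fun k => by
      have : (0:ℝ) < 1 / ((k : ℝ) + 1) := by positivity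
      rw [hudef]
      simp only
      linarith
    have hugt : ∀ k, α < u k := fun k => by
      have : (0:ℝ) < 1 / ((k : ℝ) + 1) := by positivity
      rw [hudef]
      simp only
      linarith
    have hulim : Tendsto u atTop (𝓝 α) := by
      have h2 : Tendsto (fun k : ℕ => 1 / ((k:ℝ) + 1)) atTop (𝓝 0) :=
        tendsto_one_div_add_atTop_nhds_zero_nat
      have h3 := (tendsto_const_nhds (x := α)).add h2
      rw [hudef]
      simpa using h3
    have hev : ∀ᶠ k in atTop, ∀ i, c * x i ≤ ∑ j, ((lapT μ (u k : ℂ)) i j).re * x j := by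
      rw [eventually_all]
      intro i
      rcases eq_or_lt_of_le (hxnn i) with hxi | hxi
      · refine Eventually.of_forall fun k => ?_
        rw [← hxi, mul_zero]
        exact Finset.sum_nonneg fun j _ =>
          mul_nonneg ((MNonneg_lapT (u k)) i j).2 (hxnn j)
      · have hlim2 : Tendsto (fun k => ∑ j, ((lapT μ (u k : ℂ)) i j).re * x j) atTop
            (𝓝 (∑ j, ((lapT μ (α : ℂ)) i j).re * x j)) :=
          tendsto_finset_sum _ fun j _ =>
            (lapT_entry_tendsto hsupp hθ₀dom hu0 hulim i j).mul_const (x j)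
        have hlt2 : c * x i < ∑ j, ((lapT μ (α : ℂ)) i j).re * x j :=
          lt_of_lt_of_le (by nlinarith) (hsub i)
        filter_upwards [hlim2.eventually_const_lt hlt2] with k hk using hk.le
    obtain ⟨k, hk⟩ := hev.exists
    have hcle : c ≤ specRad p (lapT μ (u k : ℂ)) :=
      le_specRad_of_subinvariant (MNonneg_lapT (u k)) hxnn hx0 hk
    have hunotS : u k ∉ S := fun hmem => absurd (le_csSup hSbdd hmem) (not_le.mpr (hugt k))
    have hlt1 : specRad p (lapT μ (u k : ℂ)) < 1 := by
      by_contra h6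
      push_neg at h6
      exact hunotS ⟨hu0 k, h6⟩
    linarith
  have hspec1 : specRad p (lapT μ (α : ℂ)) = 1 := le_antisymm hαle hαge
  have hdet : Matrix.det (1 - lapT μ (α : ℂ)) = 0 :=
    weak_perron_frobenius (MNonneg_lapT α) hspec1
  refine ⟨α, ⟨hαdom, hdet⟩, hspec1, ?_⟩
  rintro z ⟨hzdom, hzdet⟩
  by_contra hgt
  push_neg at hgt
  have h1mem : (1 : ℂ) ∈ spectrum ℂ (lapT μ z) := by
    rw [mem_spectrum_iff_det, one_smul]
    exact hzdet
  have h1le : (1:ℝ) ≤ specRad p (lapT μ z) := by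
    simpa using abs_le_specRad h1mem
  have hredom : ((z.re : ℝ) : ℂ) ∈ LTdom μ := by
    intro i j
    have h2 := hzdom i j
    rwa [Complex.ofReal_re]
  have hdom2 : specRad p (lapT μ z) ≤ specRad p (lapT μ (z.re : ℂ)) := by
    refine specRad_le_of_dominated (MNonneg_lapT z.re) fun i j => ?_
    exact lapT_entry_abs_le i j
  have hzreS : z.re ∈ S := ⟨le_of_lt (lt_of_le_of_lt hθ₀α hgt), h1le.trans hdom2⟩
  exact absurd (le_csSup hSbdd hzreS) (not_le.mpr hgt)

end Measures

end MalthusAux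

/-- Under (A1), (A2) and (A3), there exists a Malthusian parameter, i.e.
a real `α ∈ Λ` with `ρ(Lμ(α)) = 1`, and every `λ ∈ Λ` satisfies `Re(λ) ≤ α`. -/
theorem malthusian_parameter_exists {p : ℕ} (μ : Fin p → Fin p → Measure ℝ)
    (hloc : ∀ i j, IsLocallyFiniteMeasure (μ i j))
    (hsupp : ∀ i j, μ i j (Set.Iio 0) = 0)
    (hA1 : ∃ ϑ : ℝ, (ϑ : ℂ) ∈ interior (LTdom μ))
    (hA2 : specRad p (atomMat μ) < 1)
    (hA3 : ∃ θ : ℝ, (θ : ℂ) ∈ LTdom μ ∧ 1 ≤ specRad p (lapT μ θ)) :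
    ∃ α : ℝ, (α : ℂ) ∈ LambdaSet μ ∧ specRad p (lapT μ α) = 1 ∧
      ∀ z ∈ LambdaSet μ, z.re ≤ α := by
  obtain ⟨α, h1, h2, h3⟩ := MalthusAux.main hsupp hA2 hA3
  exact ⟨α, ⟨h1.1, h1.2⟩, h2, fun z hz => h3 z ⟨hz.1, hz.2⟩⟩
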